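/- arXiv:1108.0338 — 3 statements merged into one kernel-verified Lean document; each statement's English description precedes it below -/
import Mathlib

section
/- Define the Eulerian-type polynomials A_n(q) ∈ ℤ[q] (for n ≥ 1) by the generating identity 1 + Σ_{n≥1} A_n(q) t^n/n! = (1 - Σ_{n≥1} (q-1)^{n-1} t^n/n!)^{-1} in ℚ(q)[[t]]. Then the A_n satisfy the recursion A_{n+1}(q) = Σ_{i=0}^{n} q^i + Σ_{i=0}^{n-2} C(n+1, n-i) · A_{i+1}(q) · (Σ_{k=1}^{n-i-1} q^k) for all n ≥ 1. -/
open Finset PowerSeries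

local notation "K" => RatFunc ℚ
local notation "q" => (RatFunc.X : RatFunc ℚ)

instance : CharZero K := charZero_of_injective_algebraMap (RatFunc.algebraMap_injective ℚ)

lemma fact_ne (m : ℕ) : ((m.factorial : K)) ≠ 0 := Nat.cast_ne_zero.mpr m.factorial_ne_zero

lemma hq1 : (q - 1 : K) ≠ 0 := by
  refine sub_ne_zero.mpr ?_
  intro h
  have := RatFunc.algebraMap_injective ℚ (by simpa [RatFunc.algebraMap_X] using h :
    algebraMap _ (RatFunc ℚ) Polynomial.X = algebraMap _ _ 1)
  simpa [Polynomial.coeff_one] using congrArg (Polynomial.coeff · 1) this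

lemma hIcc (M : ℕ) : (∑ k ∈ Icc 1 M, (q:K)^k) = ((q:K)^(M+1) - q)/(q-1) := by
  induction M with
  | zero => simp
  | succ M ih =>
    rw [Finset.sum_Icc_succ_top (by omega : 1 ≤ M+1), ih]
    field_simp [hq1]
    ring

lemma keyA : (PowerSeries.mk fun m => ((q:K)^m - q)/(m.factorial : K)) =
    (PowerSeries.mk fun m => ((1:K) - q)/(m.factorial : K)) *
    (1 - PowerSeries.mk fun m => if m = 0 then 0 else ((q:K) - 1)^(m-1)/(m.factorial : K)) := by
  ext m
  rw [PowerSeries.coeff_mul, Finset.Nat.sum_antidiagonal_eq_sum_range_succ_mk]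
  simp only [coeff_mk, map_sub, PowerSeries.coeff_one]
  rw [Finset.sum_range_succ]
  have hbin : (q:K)^m = ∑ k ∈ range (m+1), (q-1)^(m-k) * (m.choose k : K) := by
    have h := add_pow (1 : K) (q - 1) m
    simp only [one_pow, one_mul, add_sub_cancel] at h
    simpa using h
  have hsum : ∀ x ∈ range m,
      ((1:K) - q)/(x.factorial : K) *
        ((if m - x = 0 then 1 else 0) -
          if m - x = 0 then 0 else ((q:K) - 1)^(m-x-1)/((m-x).factorial : K))
      = (q-1)^(m-x) * (m.choose x : K) / (m.factorial : K) := by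
    intro x hx
    have hx' : x < m := mem_range.mp hx
    have h0 : m - x ≠ 0 := by omega
    rw [if_neg h0, if_neg h0, Nat.cast_choose K hx'.le]
    obtain ⟨j, hj⟩ : ∃ j, m - x = j + 1 := ⟨m - x - 1, by omega⟩
    rw [hj]
    simp only [Nat.add_sub_cancel]
    rw [pow_succ]
    have := fact_ne x; have := fact_ne (j+1); have := fact_ne m
    field_simp
    ring
  rw [Finset.sum_congr rfl hsum, ← Finset.sum_div, hbin, Finset.sum_range_succ]
  norm_num
  rw [← add_div]
  congr 1
  ring

/-- If `A_n ∈ ℚ(q)` are defined by the generating identity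
`(1 - Σ_{n≥1} (q-1)^{n-1} t^n/n!) · (1 + Σ_{n≥1} A_n t^n/n!) = 1` in `ℚ(q)[[t]]`,
then they satisfy Procesi's recursion
`A_{n+1} = Σ_{i=0}^{n} q^i + Σ_{i=0}^{n-2} C(n+1, n-i) A_{i+1} (Σ_{k=1}^{n-i-1} q^k)`. -/
theorem stmt2 (A : ℕ → K)
    (hA : (1 - PowerSeries.mk fun m =>
        if m = 0 then 0 else (q - 1) ^ (m - 1) / (m.factorial : K)) *
      (PowerSeries.mk fun m =>
        if m = 0 then 1 else A m / (m.factorial : K)) = 1) :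
    ∀ n : ℕ, 1 ≤ n →
      A (n + 1) = (∑ i ∈ Finset.range (n + 1), q ^ i) +
        ∑ i ∈ Finset.range (n - 1), ((n + 1).choose (n - i) : K) * A (i + 1) *
          ∑ k ∈ Finset.Icc 1 (n - i - 1), q ^ k := by
  have hPT : (PowerSeries.mk fun m => ((q:K)^m - q)/(m.factorial : K)) *
      (PowerSeries.mk fun m => if m = 0 then 1 else A m / (m.factorial : K))
      = PowerSeries.mk fun m => ((1:K) - q)/(m.factorial : K) := by
    rw [keyA, mul_assoc, hA, mul_one]
  intro n hn
  obtain ⟨m, rfl⟩ : ∃ m, n = m + 1 := ⟨n - 1, by omega⟩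
  have h := congrArg (PowerSeries.coeff (R := K) (m+2)) hPT
  rw [PowerSeries.coeff_mul, Finset.Nat.sum_antidiagonal_eq_sum_range_succ_mk] at h
  simp only [coeff_mk] at h
  rw [Finset.sum_range_succ, Finset.sum_range_succ', Finset.sum_range_succ'] at h
  norm_num at h
  -- rewrite the sum in h
  have hS : (∑ x ∈ Finset.range m,
      if m + 2 - (x + 1 + 1) = 0 then ((q:K) ^ (x + 1 + 1) - q) / ((x + 1 + 1).factorial : K)
      else ((q:K) ^ (x + 1 + 1) - q) / ((x + 1 + 1).factorial : K) *
        (A (m + 2 - (x + 1 + 1)) / ((m + 2 - (x + 1 + 1)).factorial : K)))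
      = ∑ i ∈ Finset.range m, ((q:K) ^ (m + 1 - i) - q) / (((m + 1 - i).factorial : K)) *
          (A (i + 1) / ((i + 1).factorial : K)) := by
    rw [← Finset.sum_range_reflect]
    refine Finset.sum_congr rfl fun i hi => ?_
    have hi' : i < m := mem_range.mp hi
    have e1 : m - 1 - i + 1 + 1 = m + 1 - i := by omega
    rw [e1]
    have e2 : m + 2 - (m + 1 - i) = i + 1 := by omega
    rw [e2, if_neg i.succ_ne_zero]
  rw [hS] at h
  -- clear denominators in h
  have hF := fact_ne (m+2)
  have h' : (q - 1) * A (m + 2) =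
      ((m+2).factorial : K) * (∑ i ∈ Finset.range m, ((q:K) ^ (m + 1 - i) - q) /
        (((m + 1 - i).factorial : K)) * (A (i + 1) / ((i + 1).factorial : K)))
      + (q:K) ^ (m + 2) - 1 := by
    have h2 := congrArg (fun z : K => z * ((m+2).factorial : K)) h
    simp only [add_mul, mul_assoc, div_mul_cancel₀ _ hF] at h2
    linear_combination -h2
  have hFS : ((m+2).factorial : K) * (∑ i ∈ Finset.range m, ((q:K) ^ (m + 1 - i) - q) /
        (((m + 1 - i).factorial : K)) * (A (i + 1) / ((i + 1).factorial : K)))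
      = ∑ i ∈ Finset.range m, ((m + 2).choose (m + 1 - i) : K) * A (i + 1) *
          ((q:K) ^ (m + 1 - i) - q) := by
    rw [Finset.mul_sum]
    refine Finset.sum_congr rfl fun i hi => ?_
    have hi' : i < m := mem_range.mp hi
    rw [Nat.cast_choose K (by omega : m + 1 - i ≤ m + 2),
      show m + 2 - (m + 1 - i) = i + 1 by omega]
    have := fact_ne (m+1-i); have := fact_ne (i+1)
    field_simp
  rw [hFS] at h'
  -- rewrite goal
  simp only [Nat.add_sub_cancel]
  have hg1 : (∑ i ∈ Finset.range (m + 1 + 1), (q:K) ^ i) = ((q:K)^(m+2) - 1)/(q-1) := by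
    rw [eq_div_iff hq1]
    exact geom_sum_mul (q:K) (m+2)
  rw [hg1]
  have hg2 : ∀ i ∈ Finset.range m,
      ((m + 1 + 1).choose (m + 1 - i) : K) * A (i + 1) * ∑ k ∈ Finset.Icc 1 (m + 1 - i - 1), (q:K) ^ k
      = ((m + 2).choose (m + 1 - i) : K) * A (i + 1) * (((q:K) ^ (m + 1 - i) - q)/(q-1)) := by
    intro i hi
    have hi' : i < m := mem_range.mp hi
    rw [show m + 1 - i - 1 = m - i by omega, hIcc, show m - i + 1 = m + 1 - i by omega]
  rw [Finset.sum_congr rfl hg2]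
  apply mul_left_cancel₀ hq1
  rw [h', mul_add, Finset.mul_sum]
  have hc1 : (q - 1) * (((q:K)^(m+2) - 1)/(q-1)) = (q:K)^(m+2) - 1 := by
    rw [← mul_div_assoc]
    exact mul_div_cancel_left₀ _ hq1
  rw [hc1, Finset.sum_congr rfl (fun i hi =>
    show (q-1) * (((m + 2).choose (m + 1 - i) : K) * A (i + 1) *
        (((q:K) ^ (m + 1 - i) - q)/(q-1)))
      = ((m + 2).choose (m + 1 - i) : K) * A (i + 1) * ((q:K) ^ (m + 1 - i) - q) from by
    field_simp
    rw [div_eq_iff hq1]; ring)]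
  ring
end

section
/- For n ≥ 1, the one-row Hall–Littlewood symmetric polynomial P_{(n)}(y_1,…,y_k; q) := Σ_{w ∈ S_k/Stab} w( y_1^n ∏_{j=2}^{k} (y_1 - q y_j)/(y_1 - y_j) ) satisfies P_{(n)}(y; q) = Σ_{r=0}^{n-1} (-q)^r s_{(n-r,1^r)}(y), where s_{(n-r,1^r)} is the Schur polynomial of the hook partition (n-r, 1^r), as an identity of symmetric polynomials in k ≥ n variables. -/
open Finset

section HLAux

variable {R : Type*} [CommRing R]

/-- alternant determinant -/
def altd {k : ℕ} (y : Fin k → R) (β : Fin k → ℕ) : R :=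
  (Matrix.of fun i j : Fin k => y i ^ β j).det

/-- elementary symmetric sum over a finset -/
def esF {k : ℕ} (y : Fin k → R) (t : Finset (Fin k)) (s : ℕ) : R :=
  ∑ S ∈ Finset.powersetCard s t, ∏ j ∈ S, y j

/-- staircase with first column exponent `m` -/
def betaD (k m : ℕ) : Fin k → ℕ := fun j => if (j:ℕ) = 0 then m else k - 1 - (j:ℕ)

def betaH (k n r : ℕ) : Fin k → ℕ := fun j =>
  (if (j:ℕ) = 0 then n - r else if (j:ℕ) ≤ r then 1 else 0) + (k - 1 - (j:ℕ))

lemma det_split {k : ℕ} (M N : Matrix (Fin k) (Fin k) R) (t : Finset (Fin k)) :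
    ∀ P : Matrix (Fin k) (Fin k) R,
    (Matrix.of fun i j => if j ∈ t then M i j + N i j else P i j).det
      = ∑ T ∈ t.powerset, (Matrix.of fun i j =>
          if j ∈ T then N i j else if j ∈ t then M i j else P i j).det := by
  induction t using Finset.induction_on with
  | empty => intro P; simp
  | @insert a t ha ih =>
    intro P
    have key : (Matrix.of fun i j => if j ∈ insert a t then M i j + N i j else P i j)
        = (Matrix.of fun i j => if j ∈ t then M i j + N i j else P i j).updateCol a
            ((fun i => M i a) + fun i => N i a) := by
      ext i j
      by_cases hj : j = a
      · subst hj; simp [Matrix.updateCol_apply, ha]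
      · simp [Matrix.updateCol_apply, hj, Finset.mem_insert]
    rw [key, Matrix.det_updateCol_add]
    have e1 : ((Matrix.of fun i j => if j ∈ t then M i j + N i j else P i j).updateCol a
        (fun i => M i a)) = (Matrix.of fun i j => if j ∈ t then M i j + N i j
          else if j = a then M i j else P i j) := by
      ext i j
      by_cases hj : j = a
      · subst hj; simp [Matrix.updateCol_apply, ha]
      · simp [Matrix.updateCol_apply, hj]
    have e2 : ((Matrix.of fun i j => if j ∈ t then M i j + N i j else P i j).updateCol a
        (fun i => N i a)) = (Matrix.of fun i j => if j ∈ t then M i j + N i j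
          else if j = a then N i j else P i j) := by
      ext i j
      by_cases hj : j = a
      · subst hj; simp [Matrix.updateCol_apply, ha]
      · simp [Matrix.updateCol_apply, hj]
    rw [e1, e2, ih (fun i j => if j = a then M i j else P i j),
      ih (fun i j => if j = a then N i j else P i j), Finset.sum_powerset_insert ha]
    congr 1
    · refine Finset.sum_congr rfl fun T hT => ?_
      have hT' : T ⊆ t := Finset.mem_powerset.mp hT
      congr 1
      ext i j
      by_cases hjT : j ∈ T
      · simp [hjT]
      · by_cases hj : j = a
        · subst hj
          simp [hjT, ha, Finset.mem_insert]
        · simp [hjT, hj, Finset.mem_insert]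
    · refine Finset.sum_congr rfl fun T hT => ?_
      have hT' : T ⊆ t := Finset.mem_powerset.mp hT
      have haT : a ∉ T := fun h => ha (hT' h)
      congr 1
      ext i j
      by_cases hj : j = a
      · subst hj
        simp [haT, ha, Finset.mem_insert]
      · by_cases hjT : j ∈ T
        · simp [hjT, hj, Finset.mem_insert]
        · simp [hjT, hj, Finset.mem_insert]

lemma det_map_C {k : ℕ} (M : Matrix (Fin k) (Fin k) R) :
    (M.map (Polynomial.C : R → Polynomial R)).det = Polynomial.C M.det := by
  rw [RingHom.map_det]
  rfl

lemma pieri {k : ℕ} (y : Fin k → R) (β : Fin k → ℕ) (r : ℕ) :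
    esF y Finset.univ r * altd y β
      = ∑ T ∈ Finset.powersetCard r Finset.univ,
          altd y (fun j => β j + if j ∈ T then 1 else 0) := by
  classical
  have key : ∑ T ∈ (Finset.univ : Finset (Fin k)).powerset,
      Polynomial.C ((∏ j ∈ T, y j) * altd y β) * Polynomial.X ^ T.card
      = ∑ T ∈ (Finset.univ : Finset (Fin k)).powerset,
          Polynomial.C (altd y (fun j => β j + if j ∈ T then 1 else 0))
            * Polynomial.X ^ T.card := by
    have lhs : (∑ T ∈ (Finset.univ : Finset (Fin k)).powerset,
        Polynomial.C ((∏ j ∈ T, y j) * altd y β) * Polynomial.X ^ T.card)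
        = (∏ i, (Polynomial.C (y i) * Polynomial.X + 1)) * Polynomial.C (altd y β) := by
      rw [Finset.prod_add, Finset.sum_mul]
      refine Finset.sum_congr rfl fun T _ => ?_
      simp only [Finset.prod_const, Finset.prod_mul_distrib, map_mul, map_prod]
      ring
    have mid : (∏ i, (Polynomial.C (y i) * Polynomial.X + 1)) * Polynomial.C (altd y β)
        = (Matrix.of fun i j : Fin k =>
            Polynomial.C (y i ^ β j) + Polynomial.C (y i ^ (β j + 1)) * Polynomial.X).det := by
      have : (Matrix.of fun i j : Fin k =>
          Polynomial.C (y i ^ β j) + Polynomial.C (y i ^ (β j + 1)) * Polynomial.X)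
          = (Matrix.of fun i j : Fin k => (Polynomial.C (y i) * Polynomial.X + 1)
              * ((Matrix.of fun a b : Fin k => y a ^ β b).map Polynomial.C i j)) := by
        ext i j
        simp only [Matrix.of_apply, Matrix.map_apply, pow_succ, map_mul]
        ring
      rw [this, Matrix.det_mul_column, det_map_C]
      rfl
    have rhs : (Matrix.of fun i j : Fin k =>
        Polynomial.C (y i ^ β j) + Polynomial.C (y i ^ (β j + 1)) * Polynomial.X).det
        = ∑ T ∈ (Finset.univ : Finset (Fin k)).powerset,
          Polynomial.C (altd y (fun j => β j + if j ∈ T then 1 else 0))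
            * Polynomial.X ^ T.card := by
      have h0 : (Matrix.of fun i j : Fin k =>
          Polynomial.C (y i ^ β j) + Polynomial.C (y i ^ (β j + 1)) * Polynomial.X)
          = (Matrix.of fun i j : Fin k => if j ∈ (Finset.univ : Finset (Fin k)) then
              Polynomial.C (y i ^ β j) + Polynomial.C (y i ^ (β j + 1)) * Polynomial.X
            else 0) := by
        ext i j; simp
      rw [h0, det_split (fun i j => Polynomial.C (y i ^ β j))
        (fun i j => Polynomial.C (y i ^ (β j + 1)) * Polynomial.X) _ (fun _ _ => 0)]
      refine Finset.sum_congr rfl fun T _ => ?_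
      have h1 : (Matrix.of fun i j : Fin k =>
          if j ∈ T then Polynomial.C (y i ^ (β j + 1)) * Polynomial.X
          else if j ∈ (Finset.univ : Finset (Fin k)) then Polynomial.C (y i ^ β j) else 0)
          = (Matrix.of fun i j : Fin k => (if j ∈ T then Polynomial.X else 1) *
              (((Matrix.of fun a b : Fin k =>
                y a ^ (β b + if b ∈ T then 1 else 0)).map Polynomial.C) i j)) := by
        ext i j
        by_cases hj : j ∈ T
        · simp [hj, mul_comm]
        · simp [hj]
      rw [h1, Matrix.det_mul_row, det_map_C]
      have h2 : (∏ j, if j ∈ T then (Polynomial.X : Polynomial R) else 1)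
          = Polynomial.X ^ T.card := by
        rw [Finset.prod_ite_mem, Finset.univ_inter, Finset.prod_const]
      rw [h2, mul_comm]
      rfl
    rw [lhs, mid, rhs]
  have key2 := congrArg (fun p => Polynomial.coeff p r) key
  simp only [Polynomial.finset_sum_coeff, Polynomial.coeff_C_mul, Polynomial.coeff_X_pow,
    mul_ite, mul_one, mul_zero] at key2
  rw [← Finset.sum_filter, ← Finset.sum_filter] at key2
  have hfilt : ((Finset.univ : Finset (Fin k)).powerset.filter fun T => r = T.card)
      = Finset.powersetCard r Finset.univ := by
    rw [Finset.powersetCard_eq_filter]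
    apply Finset.filter_congr
    intro T _
    exact ⟨fun h => h.symm, fun h => h.symm⟩
  rw [hfilt] at key2
  rw [esF, Finset.sum_mul]
  exact key2

lemma altd_rev {p : ℕ} (z : Fin p → R) :
    (Matrix.of fun a b : Fin p => z a ^ (p - 1 - (b : ℕ))).det
      = ∏ a : Fin p, ∏ b ∈ Finset.Ioi a, (z a - z b) := by
  have h : (Matrix.of fun a b : Fin p => z a ^ (p - 1 - (b : ℕ)))
      = (Matrix.vandermonde (fun a => z (Fin.rev a))).submatrix Fin.revPerm Fin.revPerm := by
    ext a b
    simp only [Matrix.of_apply, Matrix.submatrix_apply, Matrix.vandermonde_apply, Fin.rev_rev,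
      Fin.revPerm_apply, Fin.val_rev]
    congr 1
    omega
  rw [h, Matrix.det_submatrix_equiv_self, Matrix.det_vandermonde]
  rw [Finset.prod_sigma', Finset.prod_sigma']
  refine Finset.prod_nbij' (fun x => ⟨x.2.rev, x.1.rev⟩) (fun x => ⟨x.2.rev, x.1.rev⟩)
    ?_ ?_ ?_ ?_ ?_
  · rintro ⟨a, b⟩ hab
    simp only [Finset.mem_sigma, Finset.mem_univ, Finset.mem_Ioi, true_and] at hab ⊢
    exact Fin.rev_lt_rev.mpr hab
  · rintro ⟨a, b⟩ hab
    simp only [Finset.mem_sigma, Finset.mem_univ, Finset.mem_Ioi, true_and] at hab ⊢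
    exact Fin.rev_lt_rev.mpr hab
  · rintro ⟨a, b⟩ _
    simp [Fin.rev_rev]
  · rintro ⟨a, b⟩ _
    simp [Fin.rev_rev]
  · rintro ⟨a, b⟩ _
    simp [Fin.rev_rev]

lemma vprod_split {m : ℕ} (y : Fin (m+1) → R) (i : Fin (m+1)) :
    ∏ a : Fin (m+1), ∏ b ∈ Finset.Ioi a, (y a - y b)
      = (-1)^(i:ℕ) * ((∏ j ∈ Finset.univ.erase i, (y i - y j))
          * ∏ a : Fin m, ∏ b ∈ Finset.Ioi a, (y (i.succAbove a) - y (i.succAbove b))) := by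
  rw [← Finset.mul_prod_erase Finset.univ _ (Finset.mem_univ i)]
  have hsplit : ∀ a ∈ Finset.univ.erase i,
      (∏ b ∈ Finset.Ioi a, (y a - y b))
        = (if i ∈ Finset.Ioi a then (y a - y i) else 1)
            * ∏ b ∈ (Finset.Ioi a).erase i, (y a - y b) := by
    intro a _
    by_cases hi : i ∈ Finset.Ioi a
    · rw [if_pos hi]
      exact (Finset.mul_prod_erase _ _ hi).symm
    · rw [if_neg hi, Finset.erase_eq_of_notMem hi, one_mul]
  rw [Finset.prod_congr rfl hsplit, Finset.prod_mul_distrib]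
  -- the ite product
  have h2 : (∏ a ∈ Finset.univ.erase i, (if i ∈ Finset.Ioi a then (y a - y i) else 1))
      = (-1)^(i:ℕ) * ∏ a ∈ Finset.Iio i, (y i - y a) := by
    rw [← Finset.prod_filter]
    have hf : (Finset.univ.erase i).filter (fun a => i ∈ Finset.Ioi a) = Finset.Iio i := by
      ext a
      simp only [Finset.mem_filter, Finset.mem_erase, Finset.mem_univ, Finset.mem_Ioi,
        Finset.mem_Iio, and_true, true_and]
      constructor
      · rintro ⟨_, h⟩; exact h
      · intro h; exact ⟨ne_of_lt h, h⟩
    rw [hf]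
    have : ∀ a ∈ Finset.Iio i, y a - y i = -1 * (y i - y a) := by intros; ring
    rw [Finset.prod_congr rfl this, Finset.prod_mul_distrib, Finset.prod_const, Fin.card_Iio]
  -- the double product over pairs avoiding i
  have h3 : (∏ a ∈ Finset.univ.erase i, ∏ b ∈ (Finset.Ioi a).erase i, (y a - y b))
      = ∏ a : Fin m, ∏ b ∈ Finset.Ioi a, (y (i.succAbove a) - y (i.succAbove b)) := by
    rw [Finset.prod_sigma', Finset.prod_sigma']
    refine (Finset.prod_bij
      (fun (x : Σ _ : Fin m, Fin m) (_ : x ∈ (Finset.univ : Finset (Fin m)).sigma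
          fun a => Finset.Ioi a) =>
        (⟨i.succAbove x.1, i.succAbove x.2⟩ : Σ _ : Fin (m+1), Fin (m+1)))
      ?_ ?_ ?_ ?_).symm
    · rintro ⟨a, b⟩ hab
      rw [Finset.mem_sigma] at hab ⊢
      refine ⟨Finset.mem_erase.mpr ⟨Fin.succAbove_ne i a, Finset.mem_univ _⟩,
        Finset.mem_erase.mpr ⟨Fin.succAbove_ne i b, Finset.mem_Ioi.mpr
          (Fin.succAbove_lt_succAbove_iff.mpr (Finset.mem_Ioi.mp hab.2))⟩⟩
    · rintro ⟨a, b⟩ _ ⟨c, d⟩ _ h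
      obtain ⟨h1, h2⟩ := Sigma.mk.inj_iff.mp h
      have e1 := Fin.succAbove_right_injective (p := i) h1
      have e2 := Fin.succAbove_right_injective (p := i) (eq_of_heq h2)
      exact Sigma.ext e1 (heq_of_eq e2)
    · rintro ⟨a, b⟩ hab
      rw [Finset.mem_sigma] at hab
      obtain ⟨ha, hb⟩ := hab
      have ha' : a ≠ i := (Finset.mem_erase.mp ha).1
      have hb' : b ≠ i := (Finset.mem_erase.mp hb).1
      have hba : a < b := Finset.mem_Ioi.mp (Finset.mem_erase.mp hb).2
      obtain ⟨a', haa⟩ := Fin.exists_succAbove_eq ha'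
      obtain ⟨b', hbb⟩ := Fin.exists_succAbove_eq hb'
      refine ⟨⟨a', b'⟩, Finset.mem_sigma.mpr ⟨Finset.mem_univ _, Finset.mem_Ioi.mpr ?_⟩, ?_⟩
      · rw [← haa, ← hbb] at hba
        exact Fin.succAbove_lt_succAbove_iff.mp hba
      · simp [Sigma.mk.inj_iff, haa, hbb]
    · rintro ⟨a, b⟩ _
      rfl
  rw [h2, h3]
  have h4 : (∏ b ∈ Finset.Ioi i, (y i - y b)) * ∏ a ∈ Finset.Iio i, (y i - y a)
      = ∏ j ∈ Finset.univ.erase i, (y i - y j) := by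
    have hunion : Finset.univ.erase i = Finset.Iio i ∪ Finset.Ioi i := by
      ext a
      simp only [Finset.mem_erase, Finset.mem_univ, and_true, Finset.mem_union,
        Finset.mem_Iio, Finset.mem_Ioi]
      exact ne_iff_lt_or_gt
    have hdisj : Disjoint (Finset.Iio i) (Finset.Ioi i) := by
      rw [Finset.disjoint_left]
      intro a ha ha'
      simp only [Finset.mem_Iio, Finset.mem_Ioi] at ha ha'
      exact absurd (ha.trans ha') (lt_irrefl a)
    rw [hunion, Finset.prod_union hdisj]
    ring
  rw [← h4]
  ring

lemma cofactor {m : ℕ} (y : Fin (m+1) → R) (g : Fin (m+1) → R) :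
    ((Matrix.of fun a b : Fin (m+1) => y a ^ (m - (b : ℕ))).updateCol 0 g).det
      = ∑ i : Fin (m+1), (-1)^(i:ℕ) * g i *
          ∏ a : Fin m, ∏ b ∈ Finset.Ioi a, (y (i.succAbove a) - y (i.succAbove b)) := by
  rw [Matrix.det_succ_column_zero]
  refine Finset.sum_congr rfl fun i _ => ?_
  have hentry : (((Matrix.of fun a b : Fin (m+1) =>
      y a ^ (m - (b : ℕ))).updateCol 0 g) i 0) = g i := by
    simp [Matrix.updateCol_apply]
  rw [hentry]
  congr 1
  rw [← altd_rev (fun a => y (i.succAbove a))]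
  congr 1
  ext a b
  simp only [Matrix.submatrix_apply, Matrix.updateCol_apply, Matrix.of_apply]
  rw [if_neg (Fin.succ_ne_zero b)]
  congr 1
  rw [Fin.val_succ]
  omega

lemma det_updateColumn_finsum {k : ℕ} {ι : Type*} [DecidableEq ι] (M : Matrix (Fin k) (Fin k) R)
    (j0 : Fin k) (t : Finset ι) (f : ι → Fin k → R) :
    (M.updateCol j0 (fun i => ∑ x ∈ t, f x i)).det
      = ∑ x ∈ t, (M.updateCol j0 (f x)).det := by
  induction t using Finset.induction_on with
  | empty =>
    rw [Finset.sum_empty]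
    apply Matrix.det_eq_zero_of_column_eq_zero j0
    intro i
    simp [Matrix.updateCol_apply]
  | @insert a t ha ih =>
    have hcol : (fun i => ∑ x ∈ insert a t, f x i)
        = (fun i => f a i) + fun i => ∑ x ∈ t, f x i := by
      funext i
      rw [Finset.sum_insert ha]
      rfl
    rw [hcol, Matrix.det_updateCol_add, ih, Finset.sum_insert ha]

lemma prod_linear_expand {k : ℕ} (y : Fin k → R) (t : Finset (Fin k)) (x c : R) :
    ∏ j ∈ t, (x + c * y j)
      = ∑ s ∈ Finset.range (t.card + 1), c^s * esF y t s * x^(t.card - s) := by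
  have hcomm : ∀ j ∈ t, x + c * y j = c * y j + x := fun _ _ => add_comm _ _
  rw [Finset.prod_congr rfl hcomm, Finset.prod_add, Finset.powerset_card_disjiUnion]
  erw [Finset.sum_disjiUnion]
  refine Finset.sum_congr rfl fun s _ => ?_
  rw [esF, Finset.mul_sum, Finset.sum_mul]
  refine Finset.sum_congr rfl fun T hT => ?_
  obtain ⟨hTt, hTcard⟩ := Finset.mem_powersetCard.mp hT
  rw [Finset.prod_const, Finset.prod_mul_distrib, Finset.prod_const,
    Finset.card_sdiff_of_subset hTt, hTcard]

lemma esF_insert {k : ℕ} (y : Fin k → R) {i : Fin k} {t : Finset (Fin k)} (hni : i ∉ t)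
    (s : ℕ) :
    esF y (insert i t) (s+1) = esF y t (s+1) + y i * esF y t s := by
  have hdisj : Disjoint (Finset.powersetCard (s+1) t)
      ((Finset.powersetCard s t).image (insert i)) := by
    rw [Finset.disjoint_left]
    intro T hT hT'
    obtain ⟨hTsub, _⟩ := Finset.mem_powersetCard.mp hT
    obtain ⟨S, _, rfl⟩ := Finset.mem_image.mp hT'
    exact hni (hTsub (Finset.mem_insert_self i S))
  have hinj : ∀ T1 ∈ Finset.powersetCard s t, ∀ T2 ∈ Finset.powersetCard s t,
      insert i T1 = insert i T2 → T1 = T2 := by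
    intro T1 hT1 T2 hT2 h
    obtain ⟨hT1sub, _⟩ := Finset.mem_powersetCard.mp hT1
    obtain ⟨hT2sub, _⟩ := Finset.mem_powersetCard.mp hT2
    rw [← Finset.erase_insert (fun h => hni (hT1sub h)), h,
      Finset.erase_insert (fun h => hni (hT2sub h))]
  rw [esF, Finset.powersetCard_succ_insert hni, Finset.sum_union hdisj,
    Finset.sum_image hinj]
  congr 1
  rw [esF, Finset.mul_sum]
  refine Finset.sum_congr rfl fun T hT => ?_
  obtain ⟨hTsub, _⟩ := Finset.mem_powersetCard.mp hT
  rw [Finset.prod_insert (fun h => hni (hTsub h))]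

lemma esF_univ_erase {k : ℕ} (y : Fin k → R) (i : Fin k) (s : ℕ) :
    esF y Finset.univ (s+1)
      = esF y (Finset.univ.erase i) (s+1) + y i * esF y (Finset.univ.erase i) s := by
  have h := esF_insert y (Finset.notMem_erase i Finset.univ) s
  rwa [Finset.insert_erase (Finset.mem_univ i)] at h

lemma telescope_es {k : ℕ} (y : Fin k → R) (i : Fin k) (r : ℕ) :
    ∑ s ∈ Finset.range (r+1), (-1:R)^s * esF y Finset.univ s * y i ^ (r - s)
      = (-1)^r * esF y (Finset.univ.erase i) r := by
  induction r with
  | zero => simp [esF]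
  | succ r ih =>
    rw [Finset.sum_range_succ]
    have hpow : ∀ s ∈ Finset.range (r+1),
        (-1:R)^s * esF y Finset.univ s * y i ^ (r+1-s)
          = y i * ((-1)^s * esF y Finset.univ s * y i ^ (r-s)) := by
      intro s hs
      have hs' : s ≤ r := Nat.lt_succ_iff.mp (Finset.mem_range.mp hs)
      have : r + 1 - s = (r - s) + 1 := by omega
      rw [this, pow_succ]
      ring
    rw [Finset.sum_congr rfl hpow, ← Finset.mul_sum, ih, esF_univ_erase y i r, Nat.sub_self,
      pow_zero, pow_succ]
    ring

def bump {k : ℕ} (β : Fin k → ℕ) (T : Finset (Fin k)) : Fin k → ℕ :=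
  fun j => β j + if j ∈ T then 1 else 0

lemma survivors {k : ℕ} (y : Fin k → R) (m t : ℕ) (ht1 : 1 ≤ t) (htk : t ≤ k - 1)
    (T₁ T₂ : Finset (Fin k))
    (hT₁ : ∀ j : Fin k, j ∈ T₁ ↔ 1 ≤ (j:ℕ) ∧ (j:ℕ) ≤ t)
    (hT₂ : ∀ j : Fin k, j ∈ T₂ ↔ (j:ℕ) < t)
    (hc₁ : T₁.card = t) (hc₂ : T₂.card = t) :
    ∑ T ∈ Finset.powersetCard t (Finset.univ : Finset (Fin k)),
        altd y (fun j => betaD k m j + if j ∈ T then 1 else 0)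
      = altd y (fun j => betaD k m j + if j ∈ T₁ then 1 else 0)
        + altd y (fun j => betaD k m j + if j ∈ T₂ then 1 else 0) := by
  have hk2 : 2 ≤ k := by omega
  have hmem₁ : T₁ ∈ Finset.powersetCard t (Finset.univ : Finset (Fin k)) :=
    Finset.mem_powersetCard.mpr ⟨Finset.subset_univ _, hc₁⟩
  have hmem₂ : T₂ ∈ Finset.powersetCard t (Finset.univ : Finset (Fin k)) :=
    Finset.mem_powersetCard.mpr ⟨Finset.subset_univ _, hc₂⟩
  have h0T₂ : (⟨0, by omega⟩ : Fin k) ∈ T₂ := (hT₂ _).mpr (by show (0:ℕ) < t; omega)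
  have h0T₁ : (⟨0, by omega⟩ : Fin k) ∉ T₁ := fun h => by
    have := ((hT₁ _).mp h).1
    simp at this
  have hne : T₁ ≠ T₂ := fun h => h0T₁ (h ▸ h0T₂)
  have hsub : ({T₁, T₂} : Finset (Finset (Fin k)))
      ⊆ Finset.powersetCard t (Finset.univ : Finset (Fin k)) := by
    intro T hT
    rcases Finset.mem_insert.mp hT with h | h
    · exact h ▸ hmem₁
    · exact (Finset.mem_singleton.mp h) ▸ hmem₂
  rw [← Finset.sum_subset hsub ?hvanish]
  · rw [Finset.sum_pair hne]
  case hvanish =>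
    intro T hT hTne
    have hT1ne : T ≠ T₁ := fun h => hTne (h ▸ Finset.mem_insert_self _ _)
    have hT2ne : T ≠ T₂ := fun h =>
      hTne (h ▸ Finset.mem_insert_of_mem (Finset.mem_singleton_self _))
    obtain ⟨-, hTcard⟩ := Finset.mem_powersetCard.mp hT
    by_cases hgap : ∃ b ∈ T, 2 ≤ (b:ℕ) ∧ ∀ b' ∈ T, (b':ℕ) ≠ (b:ℕ) - 1
    · -- a repeated column
      obtain ⟨b, hbT, hb2, hbpred⟩ := hgap
      have hblt : (b:ℕ) - 1 < k := by omega
      set b' : Fin k := ⟨(b:ℕ) - 1, hblt⟩ with hb'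
      have hb'T : b' ∉ T := fun h => hbpred b' h rfl
      have hne' : b' ≠ b := fun h => by
        have := congrArg Fin.val h
        simp only [hb'] at this
        omega
      apply Matrix.det_zero_of_column_eq hne'
      intro a
      simp only [Matrix.of_apply]
      congr 1
      have hbk : (b:ℕ) < k := b.isLt
      show betaD k m b' + (if b' ∈ T then 1 else 0)
        = betaD k m b + (if b ∈ T then 1 else 0)
      rw [if_neg hb'T, if_pos hbT]
      show (if ((b:ℕ) - 1) = 0 then m else k - 1 - ((b:ℕ) - 1)) + 0
        = (if (b:ℕ) = 0 then m else k - 1 - (b:ℕ)) + 1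
      rw [if_neg (show ¬((b:ℕ) - 1 = 0) by omega), if_neg (show ¬((b:ℕ) = 0) by omega)]
      omega
    · -- no gap: T must be T₁ or T₂
      exfalso
      push_neg at hgap
      set N : Finset ℕ := T.image Fin.val with hN
      have hNcard : N.card = t := by
        rw [hN, Finset.card_image_of_injective _ Fin.val_injective, hTcard]
      have hNlt : ∀ x ∈ N, x < k := by
        intro x hx
        obtain ⟨j, _, rfl⟩ := Finset.mem_image.mp hx
        exact j.isLt
      have hmemN : ∀ j : Fin k, (j:ℕ) ∈ N ↔ j ∈ T := by
        intro j
        constructor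
        · intro h
          obtain ⟨j', hj', hjj⟩ := Finset.mem_image.mp h
          have := Fin.val_injective hjj
          rwa [← this]
        · intro h; exact Finset.mem_image_of_mem _ h
      have hnogap : ∀ x ∈ N, 2 ≤ x → x - 1 ∈ N := by
        intro x hx h2
        obtain ⟨j, hjT, rfl⟩ := Finset.mem_image.mp hx
        obtain ⟨b', hb'T, hb''⟩ := hgap j hjT h2
        rw [← hb'']
        exact Finset.mem_image_of_mem _ hb'T
      have hdown : ∀ x ∈ N, ∀ l, 1 ≤ l → l ≤ x → l ∈ N := by
        intro x hx l hl1 hlx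
        have key : ∀ d l', l' + d = x → 1 ≤ l' → l' ∈ N := by
          intro d
          induction d with
          | zero =>
            intro l' h h1
            rw [Nat.add_zero] at h
            exact h ▸ hx
          | succ d ih =>
            intro l' h h1
            have hl1' : l' + 1 ∈ N := ih (l' + 1) (by omega) (by omega)
            have := hnogap (l' + 1) hl1' (by omega)
            simpa using this
        exact key (x - l) l (by omega) hl1
      have hNne : N.Nonempty := Finset.card_pos.mp (by omega)
      set u := N.max' hNne with hu
      have huN : u ∈ N := N.max'_mem hNne
      have hIcc : Finset.Icc 1 u ⊆ N := by
        intro l hl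
        obtain ⟨h1, h2⟩ := Finset.mem_Icc.mp hl
        exact hdown u huN l h1 h2
      by_cases h0 : 0 ∈ N
      · -- N = range t, so T = T₂
        have hNeq : N = insert 0 (Finset.Icc 1 u) := by
          apply Finset.Subset.antisymm
          · intro x hx
            rcases Nat.eq_zero_or_pos x with h | h
            · exact h ▸ Finset.mem_insert_self _ _
            · exact Finset.mem_insert_of_mem
                (Finset.mem_Icc.mpr ⟨h, Finset.le_max' _ _ hx⟩)
          · intro x hx
            rcases Finset.mem_insert.mp hx with h | h
            · exact h ▸ h0
            · exact hIcc h
        have hucard : u + 1 = t := by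
          have := hNcard
          rw [hNeq, Finset.card_insert_of_notMem (by simp), Nat.card_Icc] at this
          omega
        apply hT2ne
        apply Finset.ext
        intro j
        have hiff : (j:ℕ) ∈ N ↔ (j:ℕ) < t := by
          rw [hNeq]
          simp only [Finset.mem_insert, Finset.mem_Icc]
          omega
        rw [← hmemN j, hT₂ j]
        exact hiff
      · -- N = Icc 1 t, so T = T₁
        have hNeq : N = Finset.Icc 1 u := by
          apply Finset.Subset.antisymm
          · intro x hx
            have hx1 : 1 ≤ x := by
              rcases Nat.eq_zero_or_pos x with h | h
              · exact absurd (h ▸ hx) h0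
              · exact h
            exact Finset.mem_Icc.mpr ⟨hx1, Finset.le_max' _ _ hx⟩
          · exact hIcc
        have hucard : u = t := by
          have := hNcard
          rw [hNeq, Nat.card_Icc] at this
          omega
        apply hT1ne
        apply Finset.ext
        intro j
        rw [← hmemN j, hT₁ j, hNeq, hucard]
        exact Finset.mem_Icc
      
lemma esF_zero {k : ℕ} (y : Fin k → R) (t : Finset (Fin k)) : esF y t 0 = 1 := by
  simp [esF]

lemma stepB {k : ℕ} (y : Fin k → R) (n : ℕ) (hn : 1 ≤ n) (hnk : n ≤ k) :
    ∀ r, r + 1 ≤ n →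
    altd y (betaH k n r) = ∑ s ∈ Finset.range (r+1),
      (-1:R)^(r-s) * esF y Finset.univ s * altd y (betaD k (n+k-1-s)) := by
  intro r
  induction r with
  | zero =>
    intro _
    rw [Finset.sum_range_one]
    simp only [Nat.sub_zero, pow_zero, esF_zero, one_mul]
    congr 1
    funext j
    simp only [betaH, betaD]
    by_cases hj : (j:ℕ) = 0
    · rw [if_pos hj, if_pos hj]
      omega
    · rw [if_neg hj, if_neg hj, if_neg (by omega : ¬((j:ℕ) ≤ 0))]
      omega
  | succ r ih =>
    intro hr1
    have ihh := ih (by omega)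
    have hkpos : 1 ≤ k := le_trans hn hnk
    have hlt₁ : ∀ x ∈ Finset.Icc 1 (r+1), x < k := by
      intro x hx
      have := Finset.mem_Icc.mp hx
      omega
    have hlt₂ : ∀ x ∈ Finset.range (r+1), x < k := by
      intro x hx
      have := Finset.mem_range.mp hx
      omega
    set T₁ : Finset (Fin k) := (Finset.Icc 1 (r+1)).attachFin hlt₁ with hT₁def
    set T₂ : Finset (Fin k) := (Finset.range (r+1)).attachFin hlt₂ with hT₂def
    have hT₁ : ∀ j : Fin k, j ∈ T₁ ↔ 1 ≤ (j:ℕ) ∧ (j:ℕ) ≤ r+1 := by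
      intro j
      rw [hT₁def, Finset.mem_attachFin]
      exact Finset.mem_Icc
    have hT₂ : ∀ j : Fin k, j ∈ T₂ ↔ (j:ℕ) < r+1 := by
      intro j
      rw [hT₂def, Finset.mem_attachFin]
      exact Finset.mem_range
    have hc₁ : T₁.card = r+1 := by
      rw [hT₁def, Finset.card_attachFin, Nat.card_Icc]
      omega
    have hc₂ : T₂.card = r+1 := by
      rw [hT₂def, Finset.card_attachFin, Finset.card_range]
    have hsurv := survivors y (n+k-2-r) (r+1) (by omega) (by omega) T₁ T₂ hT₁ hT₂ hc₁ hc₂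
    have hid₁ : (fun j => betaD k (n+k-2-r) j + if j ∈ T₁ then 1 else 0)
        = betaH k n (r+1) := by
      funext j
      have hjk : (j:ℕ) < k := j.isLt
      simp only [betaD, betaH]
      by_cases hj0 : (j:ℕ) = 0
      · have hjT : j ∉ T₁ := fun h => by
          have := ((hT₁ j).mp h).1
          omega
        rw [if_pos hj0, if_pos hj0, if_neg hjT]
        omega
      · by_cases hjr : (j:ℕ) ≤ r+1
        · have hjT : j ∈ T₁ := (hT₁ j).mpr ⟨by omega, hjr⟩
          rw [if_neg hj0, if_pos hjT, if_neg hj0, if_pos hjr]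
          omega
        · have hjT : j ∉ T₁ := fun h => hjr ((hT₁ j).mp h).2
          rw [if_neg hj0, if_neg hjT, if_neg hj0, if_neg hjr]
          omega
    have hid₂ : (fun j => betaD k (n+k-2-r) j + if j ∈ T₂ then 1 else 0)
        = betaH k n r := by
      funext j
      have hjk : (j:ℕ) < k := j.isLt
      simp only [betaD, betaH]
      by_cases hj0 : (j:ℕ) = 0
      · have hjT : j ∈ T₂ := (hT₂ j).mpr (by omega)
        rw [if_pos hj0, if_pos hjT, if_pos hj0]
        omega
      · by_cases hjr : (j:ℕ) ≤ r
        · have hjT : j ∈ T₂ := (hT₂ j).mpr (by omega)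
          rw [if_neg hj0, if_pos hjT, if_neg hj0, if_pos hjr]
          omega
        · have hjT : j ∉ T₂ := fun h => hjr (by have := (hT₂ j).mp h; omega)
          rw [if_neg hj0, if_neg hjT, if_neg hj0, if_neg hjr]
          omega
    rw [hid₁, hid₂] at hsurv
    have key := (pieri y (betaD k (n+k-2-r)) (r+1)).trans hsurv
    rw [Finset.sum_range_succ, Nat.sub_self, pow_zero, one_mul]
    have hD : n + k - 1 - (r+1) = n + k - 2 - r := by omega
    rw [hD]
    have hsgn : ∀ s ∈ Finset.range (r+1),
        (-1:R)^(r+1-s) * esF y Finset.univ s * altd y (betaD k (n+k-1-s))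
          = -((-1:R)^(r-s) * esF y Finset.univ s * altd y (betaD k (n+k-1-s))) := by
      intro s hs
      have hs' : s ≤ r := Nat.lt_succ_iff.mp (Finset.mem_range.mp hs)
      have : r+1-s = (r-s)+1 := by omega
      rw [this, pow_succ]
      ring
    rw [Finset.sum_congr rfl hsgn, Finset.sum_neg_distrib, ← ihh]
    linear_combination -key

lemma swap_tri {M : Type*} [AddCommMonoid M] (b : ℕ) (f : ℕ → ℕ → M) :
    ∑ s ∈ Finset.range b, ∑ r ∈ Finset.Ico s b, f s r
      = ∑ r ∈ Finset.range b, ∑ s ∈ Finset.range (r+1), f s r := by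
  rw [Finset.range_eq_Ico, Finset.sum_Ico_Ico_comm]
  simp only [Finset.range_eq_Ico]

lemma altd_dup {k : ℕ} (y : Fin k → R) {w : ℕ} (hw : w + 2 ≤ k) :
    altd y (betaD k w) = 0 := by
  have hlt : k - 1 - w < k := by omega
  have hne : (⟨0, by omega⟩ : Fin k) ≠ (⟨k - 1 - w, hlt⟩ : Fin k) := by
    intro h
    have := congrArg Fin.val h
    simp only at this
    omega
  apply Matrix.det_zero_of_column_eq hne
  intro a
  simp only [Matrix.of_apply]
  congr 1
  show (if (0:ℕ) = 0 then w else k - 1 - 0) = (if (k-1-w : ℕ) = 0 then w else k - 1 - (k-1-w))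
  rw [if_pos rfl, if_neg (by omega : ¬(k-1-w = 0))]
  omega

lemma altd_as_update {m : ℕ} (y : Fin (m+1) → R) (w : ℕ) :
    ((Matrix.of fun a b : Fin (m+1) => y a ^ (m - (b:ℕ))).updateCol 0
        (fun i => y i ^ w)).det = altd y (betaD (m+1) w) := by
  congr 1
  ext a b
  rw [Matrix.updateCol_apply, Matrix.of_apply]
  by_cases hb : b = 0
  · subst hb
    rw [if_pos rfl]
    rfl
  · rw [if_neg hb, Matrix.of_apply]
    have hb' : (b:ℕ) ≠ 0 := fun h => hb (Fin.ext h)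
    show y a ^ (m - (b:ℕ)) = y a ^ (if (b:ℕ) = 0 then w else m + 1 - 1 - (b:ℕ))
    rw [if_neg hb', show m + 1 - 1 - (b:ℕ) = m - (b:ℕ) by omega]

lemma newton {m : ℕ} (y : Fin (m+1) → R) {w : ℕ} (hw : m + 1 ≤ w) :
    ∑ s ∈ Finset.range (m+2), (-1:R)^s * esF y Finset.univ s * altd y (betaD (m+1) (w-s))
      = 0 := by
  have hstep : ∀ s ∈ Finset.range (m+2),
      (-1:R)^s * esF y Finset.univ s * altd y (betaD (m+1) (w-s))
        = ((Matrix.of fun a b : Fin (m+1) => y a ^ (m - (b:ℕ))).updateCol 0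
            (fun i => ((-1:R)^s * esF y Finset.univ s) * y i ^ (w-s))).det := by
    intro s _
    have h1 : (fun i => ((-1:R)^s * esF y Finset.univ s) * y i ^ (w-s))
        = ((-1:R)^s * esF y Finset.univ s) • (fun i => y i ^ (w-s)) := by
      funext i
      simp [smul_eq_mul]
    rw [h1, Matrix.det_updateCol_smul, altd_as_update]
  rw [Finset.sum_congr rfl hstep, ← det_updateColumn_finsum]
  apply Matrix.det_eq_zero_of_column_eq_zero 0
  intro i
  rw [Matrix.updateCol_apply, if_pos rfl]
  have hsplit : ∀ s ∈ Finset.range (m+2),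
      ((-1:R)^s * esF y Finset.univ s) * y i ^ (w-s)
        = y i ^ (w-(m+1)) * ((-1:R)^s * esF y Finset.univ s * y i ^ (m+1-s)) := by
    intro s hs
    have hs' : s < m+2 := Finset.mem_range.mp hs
    have h : w - s = (w - (m+1)) + (m+1-s) := by omega
    rw [h, pow_add]
    ring
  rw [Finset.sum_congr rfl hsplit, ← Finset.mul_sum]
  have hprod := prod_linear_expand y Finset.univ (y i) (-1)
  rw [Finset.card_univ, Fintype.card_fin] at hprod
  have hzero : ∏ j ∈ (Finset.univ : Finset (Fin (m+1))), (y i + (-1) * y j) = 0 :=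
    Finset.prod_eq_zero (Finset.mem_univ i) (by ring)
  rw [hzero] at hprod
  rw [← hprod, mul_zero]

lemma stepA {m : ℕ} (y : Fin (m+1) → R) (q : R) (n : ℕ) (hn : 1 ≤ n) :
    ((Matrix.of fun a b : Fin (m+1) => y a ^ (m - (b:ℕ))).updateCol 0
        (fun i => y i ^ n * ∏ j ∈ Finset.univ.erase i, (y i - q * y j))).det
      = ∑ r ∈ Finset.range (m+1), q^r * ∑ s ∈ Finset.range (r+1),
          (-1:R)^s * esF y Finset.univ s * altd y (betaD (m+1) (n+m-s)) := by
  have hcol : ∀ i : Fin (m+1), y i ^ n * ∏ j ∈ Finset.univ.erase i, (y i - q * y j)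
      = ∑ s ∈ Finset.range (m+1),
          (((-1:R)^s * esF y Finset.univ s) * (∑ r ∈ Finset.Ico s (m+1), q^r))
            * y i ^ (n+m-s) := by
    intro i
    have hcard : (Finset.univ.erase i).card = m := by
      rw [Finset.card_erase_of_mem (Finset.mem_univ i), Finset.card_univ, Fintype.card_fin]
      omega
    have hco : ∀ j ∈ Finset.univ.erase i, y i - q * y j = y i + (-q) * y j := by
      intro j _
      ring
    rw [Finset.prod_congr rfl hco, prod_linear_expand y _ (y i) (-q), hcard, Finset.mul_sum]
    -- LHS: ∑_{s∈range(m+1)} y^n * ((-q)^s * ê_s * y^(m-s))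
    -- RHS: double sum, swap, telescope
    have hrhs : ∑ s ∈ Finset.range (m+1),
        (((-1:R)^s * esF y Finset.univ s) * (∑ r ∈ Finset.Ico s (m+1), q^r)) * y i ^ (n+m-s)
        = ∑ r ∈ Finset.range (m+1), ∑ s ∈ Finset.range (r+1),
            ((-1:R)^s * esF y Finset.univ s) * q^r * y i ^ (n+m-s) := by
      have h1 : ∀ s ∈ Finset.range (m+1),
          (((-1:R)^s * esF y Finset.univ s) * (∑ r ∈ Finset.Ico s (m+1), q^r))
              * y i ^ (n+m-s)
            = ∑ r ∈ Finset.Ico s (m+1),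
                ((-1:R)^s * esF y Finset.univ s) * q^r * y i ^ (n+m-s) := by
        intro s _
        rw [Finset.mul_sum, Finset.sum_mul]
      rw [Finset.sum_congr rfl h1]
      exact swap_tri (m+1)
        (fun s r => ((-1:R)^s * esF y Finset.univ s) * q^r * y i ^ (n+m-s))
    rw [hrhs]
    refine Finset.sum_congr rfl fun r hr => ?_
    have hr' : r ≤ m := Nat.lt_succ_iff.mp (Finset.mem_range.mp hr)
    have hinner : ∑ s ∈ Finset.range (r+1),
        ((-1:R)^s * esF y Finset.univ s) * q^r * y i ^ (n+m-s)
        = (q^r * y i ^ (n+m-r)) * ∑ s ∈ Finset.range (r+1),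
            (-1:R)^s * esF y Finset.univ s * y i ^ (r-s) := by
      rw [Finset.mul_sum]
      refine Finset.sum_congr rfl fun s hs => ?_
      have hs' : s ≤ r := Nat.lt_succ_iff.mp (Finset.mem_range.mp hs)
      have h : n + m - s = (r - s) + (n + m - r) := by omega
      rw [h, pow_add]
      ring
    rw [hinner, telescope_es]
    have hq : (-q : R)^r = (-1:R)^r * q^r := by
      rw [show (-q : R) = (-1) * q by ring, mul_pow]
    have hy : y i ^ n * y i ^ (m - r) = y i ^ (n + m - r) := by
      rw [← pow_add]
      congr 1
      omega
    calc y i ^ n * ((-q)^r * esF y (Finset.univ.erase i) r * y i ^ (m-r))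
        = ((-q)^r * esF y (Finset.univ.erase i) r) * (y i ^ n * y i ^ (m-r)) := by ring
      _ = ((-1:R)^r * q^r * esF y (Finset.univ.erase i) r) * y i ^ (n+m-r) := by
          rw [hq, hy]
      _ = q^r * y i ^ (n+m-r) * ((-1:R)^r * esF y (Finset.univ.erase i) r) := by ring
  rw [show (fun i => y i ^ n * ∏ j ∈ Finset.univ.erase i, (y i - q * y j))
      = fun i => ∑ s ∈ Finset.range (m+1),
          (((-1:R)^s * esF y Finset.univ s) * (∑ r ∈ Finset.Ico s (m+1), q^r))
            * y i ^ (n+m-s) from funext hcol]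
  rw [det_updateColumn_finsum]
  have hterm : ∀ s ∈ Finset.range (m+1),
      ((Matrix.of fun a b : Fin (m+1) => y a ^ (m - (b:ℕ))).updateCol 0
          (fun i => (((-1:R)^s * esF y Finset.univ s) * (∑ r ∈ Finset.Ico s (m+1), q^r))
            * y i ^ (n+m-s))).det
        = ∑ r ∈ Finset.Ico s (m+1),
            ((-1:R)^s * esF y Finset.univ s * q^r) * altd y (betaD (m+1) (n+m-s)) := by
    intro s _
    have h1 : (fun i => (((-1:R)^s * esF y Finset.univ s) * (∑ r ∈ Finset.Ico s (m+1), q^r))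
          * y i ^ (n+m-s))
        = (((-1:R)^s * esF y Finset.univ s) * (∑ r ∈ Finset.Ico s (m+1), q^r))
            • (fun i => y i ^ (n+m-s)) := by
      funext i
      simp [smul_eq_mul]
    rw [h1, Matrix.det_updateCol_smul, altd_as_update, ← Finset.sum_mul, ← Finset.mul_sum]
  rw [Finset.sum_congr rfl hterm, swap_tri]
  refine Finset.sum_congr rfl fun r _ => ?_
  rw [Finset.mul_sum]
  refine Finset.sum_congr rfl fun s _ => ?_
  ring

end HLAux

/-- The Schur function of the hook partition `(n-r, 1^r)` in `k` variables,
given by the bialternant formula: the ratio of the determinant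
`det(y_i^{λ_j + k - 1 - j})` (with `λ = (n-r, 1, …, 1, 0, …, 0)`, indices
`j = 0, …, k-1`) by the Vandermonde determinant `det(y_i^{k - 1 - j})`. -/
noncomputable def hookSchur {K : Type*} [Field K] (k n r : ℕ) (y : Fin k → K) : K :=
  Matrix.det (Matrix.of fun i j : Fin k =>
      y i ^ ((if (j : ℕ) = 0 then n - r else if (j : ℕ) ≤ r then 1 else 0) + (k - 1 - j))) /
    Matrix.det (Matrix.of fun i j : Fin k => y i ^ (k - 1 - (j : ℕ)))

section HLField

variable {K : Type*} [Field K]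

lemma sum_div_eq_det {m : ℕ} (y : Fin (m+1) → K) (hy : Function.Injective y)
    (g : Fin (m+1) → K) :
    (∑ i, g i / ∏ j ∈ Finset.univ.erase i, (y i - y j))
      = ((Matrix.of fun a b : Fin (m+1) => y a ^ (m - (b : ℕ))).updateCol 0 g).det
        / ∏ a : Fin (m+1), ∏ b ∈ Finset.Ioi a, (y a - y b) := by
  rw [cofactor, Finset.sum_div]
  refine Finset.sum_congr rfl fun i _ => ?_
  rw [vprod_split y i]
  set Q := ∏ a : Fin m, ∏ b ∈ Finset.Ioi a, (y (i.succAbove a) - y (i.succAbove b)) with hQdef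
  set P := ∏ j ∈ Finset.univ.erase i, (y i - y j) with hPdef
  have hP : P ≠ 0 := by
    rw [hPdef]
    apply Finset.prod_ne_zero_iff.mpr
    intro j hj
    exact sub_ne_zero.mpr fun h => (Finset.mem_erase.mp hj).1 (hy h).symm
  have hQ : Q ≠ 0 := by
    rw [hQdef]
    apply Finset.prod_ne_zero_iff.mpr
    intro a _
    apply Finset.prod_ne_zero_iff.mpr
    intro b hb
    refine sub_ne_zero.mpr fun h => ?_
    have h2 := Fin.succAbove_right_injective (p := i) (hy h)
    rw [h2] at hb
    exact absurd (Finset.mem_Ioi.mp hb) (lt_irrefl b)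
  set s := ((-1:K))^(i:ℕ) with hs
  have hsne : s ≠ 0 := by
    rw [hs]
    exact pow_ne_zero _ (neg_ne_zero.mpr one_ne_zero)
  have hD : s * (P * Q) ≠ 0 := mul_ne_zero hsne (mul_ne_zero hP hQ)
  rw [div_eq_div_iff hP hD]
  ring

theorem stmt8_aux (k n : ℕ) (hn : 1 ≤ n) (hnk : n ≤ k)
    (y : Fin k → K) (hy : Function.Injective y) (q : K) :
    ∑ i, y i ^ n * ∏ j ∈ Finset.univ.erase i, (y i - q * y j) / (y i - y j) =
      ∑ r ∈ Finset.range n,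
        (-q) ^ r * ((Matrix.det (Matrix.of fun i j : Fin k =>
          y i ^ ((if (j : ℕ) = 0 then n - r else if (j : ℕ) ≤ r then 1 else 0) + (k - 1 - j)))) /
        Matrix.det (Matrix.of fun i j : Fin k => y i ^ (k - 1 - (j : ℕ)))) := by
  obtain ⟨m, rfl⟩ : ∃ m, k = m + 1 := ⟨k - 1, by omega⟩
  have hL1 : ∀ i ∈ (Finset.univ : Finset (Fin (m+1))),
      y i ^ n * ∏ j ∈ Finset.univ.erase i, (y i - q * y j) / (y i - y j)
        = (y i ^ n * ∏ j ∈ Finset.univ.erase i, (y i - q * y j))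
            / ∏ j ∈ Finset.univ.erase i, (y i - y j) := by
    intro i _
    rw [Finset.prod_div_distrib, mul_div_assoc]
  rw [Finset.sum_congr rfl hL1,
    sum_div_eq_det y hy (fun i => y i ^ n * ∏ j ∈ Finset.univ.erase i, (y i - q * y j))]
  have hR1 : ∀ r ∈ Finset.range n,
      (-q) ^ r * ((Matrix.det (Matrix.of fun i j : Fin (m+1) =>
          y i ^ ((if (j : ℕ) = 0 then n - r else if (j : ℕ) ≤ r then 1 else 0)
            + (m + 1 - 1 - j)))) /
        Matrix.det (Matrix.of fun i j : Fin (m+1) => y i ^ (m + 1 - 1 - (j : ℕ))))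
      = ((-q) ^ r * altd y (betaH (m+1) n r))
          / ∏ a : Fin (m+1), ∏ b ∈ Finset.Ioi a, (y a - y b) := by
    intro r _
    rw [altd_rev y, mul_div_assoc]
    rfl
  rw [Finset.sum_congr rfl hR1, ← Finset.sum_div]
  congr 1
  -- numerator identity
  rw [stepA y q n hn]
  have hsub : Finset.range n ⊆ Finset.range (m+1) := Finset.range_subset_range.mpr hnk
  have hvan : ∀ r ∈ Finset.range (m+1), r ∉ Finset.range n →
      q^r * ∑ s ∈ Finset.range (r+1),
        (-1:K)^s * esF y Finset.univ s * altd y (betaD (m+1) (n+m-s)) = 0 := by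
    intro r hr hrn
    have hr1 : r < m + 1 := Finset.mem_range.mp hr
    have hrge : n ≤ r := by
      by_contra h
      exact hrn (Finset.mem_range.mpr (by omega))
    have hnew := newton y (w := n+m) (by omega)
    have hcons : (∑ s ∈ Finset.range (r+1),
          (-1:K)^s * esF y Finset.univ s * altd y (betaD (m+1) (n+m-s)))
        + ∑ s ∈ Finset.Ico (r+1) (m+2),
          (-1:K)^s * esF y Finset.univ s * altd y (betaD (m+1) (n+m-s))
        = ∑ s ∈ Finset.range (m+2),
          (-1:K)^s * esF y Finset.univ s * altd y (betaD (m+1) (n+m-s)) := by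
      rw [Finset.range_eq_Ico, Finset.range_eq_Ico]
      exact Finset.sum_Ico_consecutive _ (by omega) (by omega)
    have hz : ∑ s ∈ Finset.Ico (r+1) (m+2),
        (-1:K)^s * esF y Finset.univ s * altd y (betaD (m+1) (n+m-s)) = 0 := by
      refine Finset.sum_eq_zero fun s hs => ?_
      obtain ⟨hs1, hs2⟩ := Finset.mem_Ico.mp hs
      rw [altd_dup y (show (n+m-s)+2 ≤ m+1 by omega), mul_zero]
    have hW : (∑ s ∈ Finset.range (r+1),
        (-1:K)^s * esF y Finset.univ s * altd y (betaD (m+1) (n+m-s))) = 0 := by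
      linear_combination hcons - hz + hnew
    rw [hW, mul_zero]
  rw [← Finset.sum_subset hsub hvan]
  refine Finset.sum_congr rfl fun r hr => ?_
  have hr' : r + 1 ≤ n := Finset.mem_range.mp hr
  rw [stepB y n hn hnk r hr']
  have hidx : ∀ s : ℕ, n + (m+1) - 1 - s = n + m - s := fun s => by omega
  simp only [hidx]
  rw [Finset.mul_sum, Finset.mul_sum]
  refine Finset.sum_congr rfl fun s hs => ?_
  have hs' : s ≤ r := Nat.lt_succ_iff.mp (Finset.mem_range.mp hs)
  have hq : (-q:K)^r = (-1:K)^r * q^r := by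
    rw [show (-q:K) = (-1) * q by ring, mul_pow]
  have hsgn : (-1:K)^r * (-1:K)^(r-s) = (-1:K)^s := by
    rw [← pow_add, show r + (r-s) = s + 2*(r-s) by omega, pow_add, pow_mul, neg_one_sq,
      one_pow, mul_one]
  linear_combination
    (-(esF y Finset.univ s * altd y (betaD (m+1) (n+m-s)) * q^r)) * hsgn
    - ((-1:K)^(r-s) * esF y Finset.univ s * altd y (betaD (m+1) (n+m-s))) * hq

end HLField

/-- The one-row Hall–Littlewood polynomial
`P_{(n)}(y; q) = Σ_i y_i^n ∏_{j≠i} (y_i - q y_j)/(y_i - y_j)` equals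
`Σ_{r=0}^{n-1} (-q)^r s_{(n-r,1^r)}(y)` in `k ≥ n` variables. -/
theorem stmt8 (K : Type*) [Field K] (k n : ℕ) (hn : 1 ≤ n) (hnk : n ≤ k)
    (y : Fin k → K) (hy : Function.Injective y) (q : K) :
    ∑ i, y i ^ n * ∏ j ∈ Finset.univ.erase i, (y i - q * y j) / (y i - y j) =
      ∑ r ∈ Finset.range n, (-q) ^ r * hookSchur k n r y := by
  simp only [hookSchur]
  exact stmt8_aux k n hn hnk y hy q
end

section
/- In ℚ(q)[[t]], define H(t) = Σ_{r≥0} h_r t^r to be any power series with h_0 = 1 and define E(t) by E(t) = (1-q)H(t)/(H(qt) - qH(t)). Then E(t) is a well-defined power series with constant term 1, and writing E(t) = 1 + Σ_{n≥1} E_n t^n, the coefficients satisfy the Procesi-type recursion E_{n+1} = h_{n+1} Σ_{i=0}^n q^i + Σ_{i=0}^{n-2} h_{n-i} E_{i+1} (Σ_{k=1}^{n-i-1} q^k) for all n ≥ 1, together with E_1 = h_1. -/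
open Finset PowerSeries

local notation "K" => RatFunc ℚ
local notation "q" => (RatFunc.X : RatFunc ℚ)

/-- Let `H(t) = Σ_{r≥0} h_r t^r ∈ ℚ(q)[[t]]` with `h_0 = 1` and let `E(t)` satisfy
`E(t) · (H(qt) - q H(t)) = (1-q) H(t)` (defining `E = (1-q)H(t)/(H(qt) - qH(t))`,
which makes sense since `H(qt) - qH(t)` has constant term `1 - q ≠ 0`).
Then `E` has constant term `1`, `E_1 = h_1`, and the coefficients `E_n` of `E`
satisfy Procesi's recursion
`E_{n+1} = h_{n+1} Σ_{i=0}^n q^i + Σ_{i=0}^{n-2} h_{n-i} E_{i+1} (Σ_{k=1}^{n-i-1} q^k)`. -/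
theorem stmt11 (h : ℕ → K) (h0 : h 0 = 1) (E : PowerSeries K)
    (hE : E * (PowerSeries.rescale q (PowerSeries.mk h) -
        PowerSeries.C q * PowerSeries.mk h) =
      PowerSeries.C (1 - q) * PowerSeries.mk h) :
    PowerSeries.constantCoeff E = 1 ∧
    PowerSeries.coeff 1 E = h 1 ∧
    ∀ n : ℕ, 1 ≤ n →
      PowerSeries.coeff (n + 1) E =
        h (n + 1) * (∑ i ∈ Finset.range (n + 1), q ^ i) +
          ∑ i ∈ Finset.range (n - 1), h (n - i) * PowerSeries.coeff (i + 1) E *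
            ∑ k ∈ Finset.Icc 1 (n - i - 1), q ^ k := by
  have hX : (q : K) ≠ 1 := by
    intro hX
    have h1 : algebraMap (Polynomial ℚ) K (Polynomial.X) = algebraMap (Polynomial ℚ) K 1 := by
      simpa [RatFunc.algebraMap_X] using hX
    exact Polynomial.X_ne_C (1:ℚ) (by simpa using RatFunc.algebraMap_injective ℚ h1)
  have hq1 : (1 - q : K) ≠ 0 := sub_ne_zero.mpr (fun e => hX e.symm)
  have key : ∀ N : ℕ, ∑ i ∈ Finset.range (N+1),
      PowerSeries.coeff i E * (q^(N-i) * h (N-i) - q * h (N-i)) = (1-q) * h N := by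
    intro N
    have hc := congrArg (PowerSeries.coeff N) hE
    rw [PowerSeries.coeff_mul, Finset.Nat.sum_antidiagonal_eq_sum_range_succ
      (fun i j => PowerSeries.coeff i E * PowerSeries.coeff j
        (PowerSeries.rescale q (PowerSeries.mk h) - PowerSeries.C q * PowerSeries.mk h)),
      PowerSeries.coeff_C_mul, PowerSeries.coeff_mk] at hc
    simpa [PowerSeries.coeff_rescale] using hc
  have gs1 : ∀ N : ℕ, (∑ i ∈ Finset.range N, (q:K)^i) * (1-q) = 1 - q^N := by
    intro N
    linear_combination - geom_sum_mul (q:K) N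
  have gs2 : ∀ r : ℕ, (∑ k ∈ Finset.Icc 1 r, (q:K)^k) * (1-q) = q - q^(r+1) := by
    intro r
    rw [← Finset.Ico_add_one_right_eq_Icc, Finset.sum_Ico_eq_sum_range]
    have er : r + 1 - 1 = r := by omega
    rw [er]
    have e : ∑ i ∈ Finset.range r, (q:K)^(1+i) = q * ∑ i ∈ Finset.range r, (q:K)^i := by
      rw [Finset.mul_sum]
      exact Finset.sum_congr rfl (fun i _ => by rw [pow_add, pow_one])
    rw [e, mul_assoc, gs1]
    ring
  -- constant coefficient
  have h00 : PowerSeries.coeff 0 E = 1 := by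
    have k0 := key 0
    rw [Finset.sum_range_one] at k0
    simp only [Nat.sub_zero, pow_zero, one_mul, h0, mul_one] at k0
    apply mul_right_cancel₀ hq1
    linear_combination k0
  have hE1 : PowerSeries.coeff 1 E = h 1 := by
    have k1 := key 1
    rw [Finset.sum_range_succ, Finset.sum_range_one] at k1
    simp only [Nat.sub_zero, Nat.sub_self, pow_zero, pow_one, one_mul, h0, mul_one, h00] at k1
    apply mul_right_cancel₀ hq1
    linear_combination k1
  refine ⟨by rw [← PowerSeries.coeff_zero_eq_constantCoeff_apply]; exact h00, hE1, ?_⟩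
  intro n hn
  obtain ⟨m, rfl⟩ : ∃ m, n = m + 1 := ⟨n - 1, by omega⟩
  have k := key (m+1+1)
  rw [Finset.sum_range_succ, Finset.sum_range_succ', Finset.sum_range_succ] at k
  simp only [h0, h00, Nat.sub_self, pow_zero, one_mul, mul_one, Nat.sub_zero] at k
  have e0 : m+1+1-(m+1) = 1 := by omega
  rw [e0, pow_one, sub_self, mul_zero, add_zero] at k
  set A := ∑ i ∈ Finset.range m, h (m+1-i) * PowerSeries.coeff (i+1) E * ((q:K) - q^(m+1-i)) with hA
  have esum : ∑ x ∈ Finset.range m, PowerSeries.coeff (x+1) E *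
      ((q:K)^(m+1+1-(x+1)) * h (m+1+1-(x+1)) - q * h (m+1+1-(x+1))) = -A := by
    rw [hA, ← Finset.sum_neg_distrib]
    apply Finset.sum_congr rfl
    intro i hi
    have e : m+1+1-(i+1) = m+1-i := by omega
    rw [e]; ring
  rw [esum] at k
  -- now the goal
  simp only [Nat.add_sub_cancel]
  apply mul_right_cancel₀ hq1
  rw [add_mul, mul_assoc, gs1, Finset.sum_mul]
  have e2 : ∑ i ∈ Finset.range m, h (m+1-i) * PowerSeries.coeff (i+1) E *
      (∑ k ∈ Finset.Icc 1 (m+1-i-1), (q:K)^k) * (1-q) = A := by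
    rw [hA]
    apply Finset.sum_congr rfl
    intro i hi
    have e : m+1-i-1 = m-i := by omega
    have e' : m-i+1 = m+1-i := by simp at hi; omega
    rw [e, mul_assoc, gs2, e']
  rw [e2]
  linear_combination k
end
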